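/- For any N ≥ 1 and any vector (ρ₁,…,ρ_N) with each ρ_k ∈ [0,1], setting ρ̄ = (1/N)∑ρ_k, one has (1/N)∑_{k=1}^N log₂(1 + (1-ρ_k)hP / ((1-ρ_k)σ_A² + σ_cov²)) ≤ log₂(1 + (1-ρ̄)hP / ((1-ρ̄)σ_A² + σ_cov²)), while the harvested energies coincide: (1/N)∑ρ_k ζhP = ρ̄ ζhP. Hence static power splitting achieves the same rate-energy region as arbitrary dynamic power splitting. -/

import Mathlib

open Real

lemma concave_aux (α β c : ℝ) (hβ : 0 < β) (hαβ : β ≤ α) (hc : 0 < c) :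
    ConcaveOn ℝ (Set.Icc (0:ℝ) 1)
      (fun x => Real.log (α*(1-x)+c) - Real.log (β*(1-x)+c)) := by
  have hα : 0 < α := lt_of_lt_of_le hβ hαβ
  have hApos : ∀ x ∈ Set.Icc (0:ℝ) 1, 0 < α*(1-x)+c := by
    intro x hx; have := hx.2; nlinarith
  have hBpos : ∀ x ∈ Set.Icc (0:ℝ) 1, 0 < β*(1-x)+c := by
    intro x hx; have := hx.2; nlinarith
  have hder : ∀ x ∈ Set.Ioo (0:ℝ) 1,
      HasDerivAt (fun x => Real.log (α*(1-x)+c) - Real.log (β*(1-x)+c))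
        (β/(β*(1-x)+c) - α/(α*(1-x)+c)) x := by
    intro x hx
    have hx' : x ∈ Set.Icc (0:ℝ) 1 := Set.mem_Icc.2 ⟨hx.1.le, hx.2.le⟩
    have hA := hApos x hx'
    have hB := hBpos x hx'
    have h1 : HasDerivAt (fun x : ℝ => α*(1-x)+c) (α * (-1)) x :=
      (((hasDerivAt_id x).const_sub 1).const_mul α).add_const c
    have h2 : HasDerivAt (fun x : ℝ => β*(1-x)+c) (β * (-1)) x :=
      (((hasDerivAt_id x).const_sub 1).const_mul β).add_const c
    have := (h1.log hA.ne').sub (h2.log hB.ne')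
    convert this using 1
    · rfl
    · rfl
    · rfl
    ring
  apply AntitoneOn.concaveOn_of_deriv (convex_Icc 0 1)
  · apply ContinuousOn.sub
    · exact (ContinuousOn.log (by fun_prop) (fun x hx => (hApos x hx).ne'))
    · exact (ContinuousOn.log (by fun_prop) (fun x hx => (hBpos x hx).ne'))
  · rw [interior_Icc]
    exact fun x hx => (hder x hx).differentiableAt.differentiableWithinAt
  · rw [interior_Icc]
    intro x hx y hy hxy
    rw [(hder x hx).deriv, (hder y hy).deriv]
    have hAx := hApos x ⟨hx.1.le, hx.2.le⟩
    have hBx := hBpos x ⟨hx.1.le, hx.2.le⟩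
    have hAy := hApos y ⟨hy.1.le, hy.2.le⟩
    have hBy := hBpos y ⟨hy.1.le, hy.2.le⟩
    have h1 : β*(α*(1-x)+c) ≤ α*(β*(1-x)+c) := by nlinarith
    have h2 : β*(α*(1-y)+c) ≤ α*(β*(1-y)+c) := by nlinarith
    rw [div_sub_div _ _ hBy.ne' hAy.ne', div_sub_div _ _ hBx.ne' hAx.ne',
      div_le_div_iff₀ (mul_pos hBy hAy) (mul_pos hBx hAx)]
    nlinarith [mul_le_mul h1 h2 (by positivity) (by positivity),
      mul_pos hAx hAy, mul_pos hBx hBy, mul_pos (mul_pos hAx hAy) (mul_pos hBx hBy)]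

/-- Proposition 1 (optimality of SPS for the separated receiver): for any splitting
vector `(ρ₁,…,ρ_N)` with each `ρ_k ∈ [0,1]`, the average rate of DPS is no larger than
the rate of SPS with the averaged ratio `ρ̄ = (1/N)∑ρ_k`, while the harvested
energies coincide. -/
theorem sps_optimal_dps (h P sA scov ζ : ℝ) (hh : 0 < h) (hP : 0 < P)
    (hsA : 0 < sA) (hscov : 0 < scov) (hζ0 : 0 < ζ) (hζ1 : ζ ≤ 1)
    (N : ℕ) (hN : 1 ≤ N) (ρ : Fin N → ℝ) (hρ : ∀ k, ρ k ∈ Set.Icc (0:ℝ) 1) :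
    (1 / (N:ℝ)) * ∑ k, Real.logb 2
        (1 + (1 - ρ k) * h * P / ((1 - ρ k) * sA + scov)) ≤
      Real.logb 2 (1 + (1 - (1 / (N:ℝ)) * ∑ k, ρ k) * h * P /
        ((1 - (1 / (N:ℝ)) * ∑ k, ρ k) * sA + scov)) ∧
    (1 / (N:ℝ)) * ∑ k, ρ k * (ζ * h * P) = ((1 / (N:ℝ)) * ∑ k, ρ k) * (ζ * h * P) := by
  have hN0 : (0:ℝ) < N := by exact_mod_cast Nat.lt_of_lt_of_le Nat.zero_lt_one hN
  constructor
  · set g : ℝ → ℝ := fun x => Real.log ((h*P+sA)*(1-x)+scov) - Real.log (sA*(1-x)+scov)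
      with hg
    have hconc : ConcaveOn ℝ (Set.Icc (0:ℝ) 1) g :=
      concave_aux (h*P+sA) sA scov hsA (by nlinarith) hscov
    -- rewrite logb as g / log 2 on Icc 0 1
    have hkey : ∀ x ∈ Set.Icc (0:ℝ) 1,
        Real.logb 2 (1 + (1 - x) * h * P / ((1 - x) * sA + scov)) = g x / Real.log 2 := by
      intro x hx
      have hx1 : (0:ℝ) ≤ 1 - x := by linarith [hx.2]
      have e1 : (0:ℝ) ≤ (h*P+sA)*(1-x) := mul_nonneg (by positivity) hx1
      have e2 : (0:ℝ) ≤ sA*(1-x) := mul_nonneg hsA.le hx1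
      have hB : 0 < (1-x)*sA + scov := by nlinarith
      have hA : 0 < (h*P+sA)*(1-x)+scov := by linarith
      have hB2 : 0 < sA*(1-x)+scov := by linarith
      have heq : 1 + (1 - x) * h * P / ((1 - x) * sA + scov)
          = ((h*P+sA)*(1-x)+scov) / (sA*(1-x)+scov) := by
        field_simp
        ring
      rw [heq, Real.logb, Real.log_div hA.ne' hB2.ne']
    -- mean in Icc
    have hmean : (1 / (N:ℝ)) * ∑ k, ρ k ∈ Set.Icc (0:ℝ) 1 := by
      constructor
      · have : (0:ℝ) ≤ ∑ k, ρ k :=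
          Finset.sum_nonneg (fun k _ => (hρ k).1)
        positivity
      · have : ∑ k, ρ k ≤ ∑ k : Fin N, (1:ℝ) :=
          Finset.sum_le_sum (fun k _ => (hρ k).2)
        simp at this
        rw [one_div, inv_mul_le_iff₀ hN0, mul_one]
        exact this
    -- Jensen
    have hJ : ∑ k : Fin N, (1/(N:ℝ)) • g (ρ k)
        ≤ g (∑ k : Fin N, (1/(N:ℝ)) • ρ k) := by
      apply hconc.le_map_sum (fun k _ => by positivity)
        (by simp [Finset.sum_const]; field_simp) (fun k _ => hρ k)
    have hsum : ∑ k : Fin N, (1/(N:ℝ)) • ρ k = (1/(N:ℝ)) * ∑ k, ρ k := by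
      rw [Finset.mul_sum]; rfl
    rw [hkey _ hmean]
    calc (1 / (N:ℝ)) * ∑ k, Real.logb 2
          (1 + (1 - ρ k) * h * P / ((1 - ρ k) * sA + scov))
        = (∑ k : Fin N, (1/(N:ℝ)) • g (ρ k)) / Real.log 2 := by
          rw [Finset.sum_congr rfl (fun k _ => hkey _ (hρ k))]
          rw [Finset.mul_sum, Finset.sum_div]
          congr 1; ext k; rw [smul_eq_mul, mul_div_assoc]
      _ ≤ g (∑ k : Fin N, (1/(N:ℝ)) • ρ k) / Real.log 2 := by
          apply div_le_div_of_nonneg_right hJ (Real.log_pos one_lt_two).le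
      _ = g ((1 / (N:ℝ)) * ∑ k, ρ k) / Real.log 2 := by rw [hsum]
  · rw [← Finset.sum_mul]; ring
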